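/- For the map φ : ℂ² → ℝ × ℂ, φ(z,w) = (½(|z|² − |w|²), i·z·w), the fibre over (0,0) consists of the single point (0,0), and the fibre over any other point is exactly one free orbit of the circle action e^{iθ}·(z,w) = (e^{iθ}z, e^{−iθ}w). -/

import Mathlib

lemma sq_eq_of_nonneg {a b : ℝ} (ha : 0 ≤ a) (hb : 0 ≤ b) (h : a ^ 2 = b ^ 2) : a = b := by
  rw [← Real.sqrt_sq ha, ← Real.sqrt_sq hb, h]

lemma abs_eq_of_phi_eq {z w z' w' : ℂ}
    (h1 : (1 / 2 : ℝ) * (‖z‖ ^ 2 - ‖w‖ ^ 2)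
        = (1 / 2 : ℝ) * (‖z'‖ ^ 2 - ‖w'‖ ^ 2))
    (h2 : z * w = z' * w') :
    ‖z‖ = ‖z'‖ ∧ ‖w‖ = ‖w'‖ := by
  set x := ‖z‖ with hx
  set y := ‖w‖ with hy
  set x' := ‖z'‖ with hx'
  set y' := ‖w'‖ with hy'
  have habs : x * y = x' * y' := by rw [hx, hy, hx', hy', ← norm_mul, ← norm_mul, h2]
  have hz0 : 0 ≤ x := norm_nonneg z
  have hw0 : 0 ≤ y := norm_nonneg w
  have hz0' : 0 ≤ x' := norm_nonneg z'
  have hw0' : 0 ≤ y' := norm_nonneg w'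
  have hd : x ^ 2 - y ^ 2 = x' ^ 2 - y' ^ 2 := by linarith
  have hsumsq : (x ^ 2 + y ^ 2) ^ 2 = (x' ^ 2 + y' ^ 2) ^ 2 := by
    linear_combination ((x ^ 2 - y ^ 2) + (x' ^ 2 - y' ^ 2)) * hd
      + 4 * (x * y + x' * y') * habs
  have hsum : x ^ 2 + y ^ 2 = x' ^ 2 + y' ^ 2 :=
    sq_eq_of_nonneg (by positivity) (by positivity) hsumsq
  exact ⟨sq_eq_of_nonneg hz0 hz0' (by linarith),
    sq_eq_of_nonneg hw0 hw0' (by linarith)⟩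

/-- For `φ(z,w) = (½(|z|² − |w|²), i·z·w)` : ℂ² → ℝ × ℂ, the fibre over `(0,0)`
is the single point `(0,0)`; the fibre over any other point is exactly one
orbit of the circle action `u·(z,w) = (u z, u⁻¹ w)`, and that orbit is free. -/
theorem stmt_1
    (φ : ℂ × ℂ → ℝ × ℂ)
    (hφ : φ = fun p => ((1 / 2 : ℝ) * (‖p.1‖ ^ 2 - ‖p.2‖ ^ 2),
      Complex.I * p.1 * p.2)) :
    (φ ⁻¹' {(0, 0)} = {(0, 0)}) ∧
    ∀ c : ℝ × ℂ, c ≠ (0, 0) → ∀ p ∈ φ ⁻¹' {c},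
      (φ ⁻¹' {c} = {q | ∃ u : Circle, ((u : ℂ) * p.1, (u : ℂ)⁻¹ * p.2) = q}) ∧
      (∀ u : Circle, ((u : ℂ) * p.1, (u : ℂ)⁻¹ * p.2) = p → u = 1) := by
  subst hφ
  constructor
  · ext ⟨z, w⟩
    simp only [Set.mem_preimage, Set.mem_singleton_iff, Prod.mk.injEq, Prod.ext_iff]
    constructor
    · rintro ⟨h1, h2⟩
      have hzw : z * w = 0 := by
        have : Complex.I * (z * w) = 0 := by rw [← mul_assoc]; exact h2
        exact (mul_eq_zero.1 this).resolve_left Complex.I_ne_zero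
      rcases mul_eq_zero.1 hzw with hz | hw
      · have : ‖w‖ = 0 := by
          have := norm_nonneg w
          have hz' : ‖z‖ = 0 := by simp [hz]
          nlinarith
        exact ⟨hz, by simpa using this⟩
      · have : ‖z‖ = 0 := by
          have := norm_nonneg z
          have hw' : ‖w‖ = 0 := by simp [hw]
          nlinarith
        exact ⟨by simpa using this, hw⟩
    · rintro ⟨rfl, rfl⟩; simp
  · rintro ⟨a, b⟩ hc ⟨z, w⟩ hp
    simp only [Set.mem_preimage, Set.mem_singleton_iff, Prod.mk.injEq] at hp
    obtain ⟨hp1, hp2⟩ := hp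
    have hne : ¬(z = 0 ∧ w = 0) := by
      rintro ⟨rfl, rfl⟩
      apply hc
      simp [Prod.ext_iff, ← hp1, ← hp2]
    constructor
    · ext ⟨z', w'⟩
      simp only [Set.mem_preimage, Set.mem_singleton_iff, Prod.mk.injEq, Set.mem_setOf_eq,
        Prod.ext_iff]
      constructor
      · rintro ⟨hq1, hq2⟩
        have h2 : z * w = z' * w' := by
          have : Complex.I * (z * w) = Complex.I * (z' * w') := by
            rw [← mul_assoc, ← mul_assoc, hp2, hq2]
          exact mul_left_cancel₀ Complex.I_ne_zero this
        obtain ⟨haz, haw⟩ := abs_eq_of_phi_eq (hp1.trans hq1.symm) h2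
        by_cases hz : z = 0
        · have hz' : z' = 0 := by
            have : ‖z'‖ = 0 := by rw [← haz, hz, norm_zero]
            simpa using this
          have hw : w ≠ 0 := fun h => hne ⟨hz, h⟩
          have hw' : w' ≠ 0 := by
            intro h
            apply hw
            have : ‖w‖ = 0 := by rw [haw, h, norm_zero]
            simpa using this
          refine ⟨⟨w / w', mem_sphere_zero_iff_norm.2 ?_⟩, ?_, ?_⟩
          · rw [norm_div]
            simp only [haw]
            exact div_self (by simpa using hw')
          · simp [hz, hz']
          · show (w / w')⁻¹ * w = w'
            field_simp
        · have hz' : z' ≠ 0 := by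
            intro h
            apply hz
            have : ‖z‖ = 0 := by rw [haz, h, norm_zero]
            simpa using this
          refine ⟨⟨z' / z, mem_sphere_zero_iff_norm.2 ?_⟩, ?_, ?_⟩
          · rw [norm_div]
            simp only [← haz]
            exact div_self (by simpa using hz)
          · show z' / z * z = z'
            field_simp
          · show (z' / z)⁻¹ * w = w'
            rw [inv_div]
            field_simp
            linear_combination h2
      · rintro ⟨u, hu1, hu2⟩
        rw [← hu1, ← hu2]
        constructor
        · rw [← hp1]
          simp [map_mul, mul_pow, Circle.norm_coe]
        · rw [← hp2]
          linear_combination (Complex.I * z * w) * mul_inv_cancel₀ (Circle.coe_ne_zero u)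
    · intro u hu
      rw [Prod.ext_iff] at hu
      obtain ⟨hu1, hu2⟩ := hu
      dsimp only at hu1 hu2
      by_cases hz : z = 0
      · have hw : w ≠ 0 := fun h => hne ⟨hz, h⟩
        have h1 : (u : ℂ)⁻¹ = 1 := mul_right_cancel₀ hw (by rw [hu2, one_mul])
        ext
        rw [Circle.coe_one, ← inv_inv (u : ℂ), h1, inv_one]
      · have h1 : (u : ℂ) = 1 := mul_right_cancel₀ hz (by rw [hu1, one_mul])
        exact Circle.ext (by rw [h1, Circle.coe_one])
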